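/- If $p_n \leq q_n$ for all $n$, then $\psi_{P,Q}$ is injective and strictly increasing on $[0,1)$. -/

import Mathlib

noncomputable def cantorDigit (p : ℕ → ℕ) (x : ℝ) (n : ℕ) : ℕ :=
  (⌊(∏ i ∈ Finset.range (n + 1), (p i : ℝ)) * Int.fract x⌋).toNat % p n

noncomputable def psiPQ (p q : ℕ → ℕ) (x : ℝ) : ℝ :=
  ∑' n : ℕ, (min (cantorDigit p x n) (q n - 1) : ℝ) / ∏ i ∈ Finset.range (n + 1), (q i : ℝ)

namespace CantorAux

variable (p : ℕ → ℕ)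

noncomputable def A (n : ℕ) : ℝ := ∏ i ∈ Finset.range n, (p i : ℝ)

lemma A_pos (hp : ∀ n, 2 ≤ p n) (n : ℕ) : 0 < A p n := by
  apply Finset.prod_pos; intro i _
  exact_mod_cast Nat.lt_of_lt_of_le two_pos (hp i)

lemma two_pow_le_A (hp : ∀ n, 2 ≤ p n) (n : ℕ) : (2:ℝ)^n ≤ A p n := by
  calc (2:ℝ)^n = ∏ _i ∈ Finset.range n, (2:ℝ) := by simp
  _ ≤ A p n := by
      apply Finset.prod_le_prod (fun i _ => by norm_num)
      intro i _; exact_mod_cast hp i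

lemma A_succ (n : ℕ) : A p (n+1) = A p n * p n := Finset.prod_range_succ _ _

noncomputable def S (x : ℝ) (n : ℕ) : ℤ := ⌊A p n * x⌋

lemma S_zero {x : ℝ} (hx : x ∈ Set.Ico (0:ℝ) 1) : S p x 0 = 0 := by
  have : A p 0 = 1 := by simp [A]
  rw [S, this, one_mul, Int.floor_eq_zero_iff]
  exact ⟨hx.1, hx.2⟩

lemma S_le (hp : ∀ n, 2 ≤ p n) (x : ℝ) (n : ℕ) : (S p x n : ℝ) ≤ A p n * x :=
  Int.floor_le _

lemma lt_S_add_one (hp : ∀ n, 2 ≤ p n) (x : ℝ) (n : ℕ) : A p n * x < S p x n + 1 :=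
  Int.lt_floor_add_one _

lemma digit_int {x : ℝ} (hx : x ∈ Set.Ico (0:ℝ) 1) (n : ℕ) :
    (cantorDigit p x n : ℤ) = S p x (n+1) % p n := by
  have hfr : Int.fract x = x := Int.fract_eq_self.mpr ⟨hx.1, hx.2⟩
  have hnn : (0:ℝ) ≤ (∏ i ∈ Finset.range (n + 1), (p i : ℝ)) * x := by
    apply mul_nonneg _ hx.1
    positivity
  have h0 : (0:ℤ) ≤ ⌊(∏ i ∈ Finset.range (n + 1), (p i : ℝ)) * x⌋ :=
    Int.floor_nonneg.mpr hnn
  unfold cantorDigit S A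
  rw [hfr]
  push_cast [Int.toNat_of_nonneg h0]
  rfl

end CantorAux

namespace CantorAux

variable (p : ℕ → ℕ)

lemma digit_lt (hp : ∀ n, 2 ≤ p n) (x : ℝ) (n : ℕ) : cantorDigit p x n < p n :=
  Nat.mod_lt _ (Nat.lt_of_lt_of_le two_pos (hp n))

lemma S_succ (hp : ∀ n, 2 ≤ p n) {x : ℝ} (hx : x ∈ Set.Ico (0:ℝ) 1) (n : ℕ) :
    S p x (n+1) = p n * S p x n + cantorDigit p x n := by
  have hpn : (0:ℝ) < p n := by exact_mod_cast Nat.lt_of_lt_of_le two_pos (hp n)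
  have h1 : (p n : ℤ) * S p x n ≤ S p x (n+1) := by
    rw [show S p x (n+1) = ⌊A p (n+1) * x⌋ from rfl, Int.le_floor, S]
    push_cast
    rw [A_succ]
    calc (p n : ℝ) * (S p x n) ≤ (p n : ℝ) * (A p n * x) := by
          exact mul_le_mul_of_nonneg_left (S_le p hp x n) hpn.le
    _ = A p n * p n * x := by ring
  have h2 : S p x (n+1) < (p n : ℤ) * S p x n + p n := by
    rw [show S p x (n+1) = ⌊A p (n+1) * x⌋ from rfl, Int.floor_lt, S]
    push_cast
    rw [A_succ]
    calc A p n * (p n : ℝ) * x = (p n : ℝ) * (A p n * x) := by ring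
    _ < (p n : ℝ) * (S p x n + 1) := by
          exact mul_lt_mul_of_pos_left (lt_S_add_one p hp x n) hpn
    _ = (p n : ℝ) * S p x n + p n := by ring
  set r : ℤ := S p x (n+1) - p n * S p x n with hr
  have hr0 : 0 ≤ r := by omega
  have hrlt : r < p n := by omega
  have : (cantorDigit p x n : ℤ) = r := by
    rw [digit_int p hx n]
    have : S p x (n+1) = p n * S p x n + r := by omega
    rw [this, add_comm, Int.add_mul_emod_self_left, Int.emod_eq_of_lt hr0 hrlt]
  omega

lemma S_eq_of_digits_eq (hp : ∀ n, 2 ≤ p n) {x y : ℝ} (hx : x ∈ Set.Ico (0:ℝ) 1)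
    (hy : y ∈ Set.Ico (0:ℝ) 1) {N : ℕ}
    (h : ∀ k < N, cantorDigit p x k = cantorDigit p y k) : S p x N = S p y N := by
  induction N with
  | zero => rw [S_zero p hx, S_zero p hy]
  | succ n ih =>
      rw [S_succ p hp hx n, S_succ p hp hy n,
        ih (fun k hk => h k (Nat.lt_succ_of_lt hk)), h n (Nat.lt_succ_self n)]

end CantorAux

namespace CantorAux

variable (p : ℕ → ℕ)

/-- there's an index where A exceeds any bound -/
lemma exists_A_gt (hp : ∀ n, 2 ≤ p n) (c : ℝ) (N : ℕ) : ∃ n, N < n ∧ c < A p n := by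
  obtain ⟨k, hk⟩ := pow_unbounded_of_one_lt c (by norm_num : (1:ℝ) < 2)
  refine ⟨max (N+1) k, lt_of_lt_of_le (Nat.lt_succ_self N) (le_max_left _ _), ?_⟩
  calc c < 2^k := hk
  _ ≤ (2:ℝ)^(max (N+1) k) := by
      apply pow_le_pow_right₀ (by norm_num) (le_max_right _ _)
  _ ≤ A p _ := two_pow_le_A p hp _

lemma exists_digit_ne (hp : ∀ n, 2 ≤ p n) {x y : ℝ} (hx : x ∈ Set.Ico (0:ℝ) 1)
    (hy : y ∈ Set.Ico (0:ℝ) 1) (hxy : x < y) :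
    ∃ n, cantorDigit p x n ≠ cantorDigit p y n := by
  by_contra h
  push_neg at h
  obtain ⟨n, _, hn⟩ := exists_A_gt p hp (1 / (y - x)) 0
  have hS : S p x n = S p y n := S_eq_of_digits_eq p hp hx hy (fun k _ => h k)
  have h1 : (S p x n : ℝ) ≤ A p n * x := S_le p hp x n
  have h2 : A p n * y < S p y n + 1 := lt_S_add_one p hp y n
  have hA : 0 < A p n := A_pos p hp n
  have : A p n * (y - x) < 1 := by rw [hS] at h1; nlinarith
  have h3 : (1:ℝ) < A p n * (y - x) := by
    have := (div_lt_iff₀ (sub_pos.mpr hxy)).mp hn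
    linarith
  linarith

lemma exists_lex (hp : ∀ n, 2 ≤ p n) {x y : ℝ} (hx : x ∈ Set.Ico (0:ℝ) 1)
    (hy : y ∈ Set.Ico (0:ℝ) 1) (hxy : x < y) :
    ∃ N, (∀ k < N, cantorDigit p x k = cantorDigit p y k) ∧
      cantorDigit p x N < cantorDigit p y N := by
  have hne := exists_digit_ne p hp hx hy hxy
  classical
  let N := Nat.find hne
  have hNne : cantorDigit p x N ≠ cantorDigit p y N := Nat.find_spec hne
  have hNpre : ∀ k < N, cantorDigit p x k = cantorDigit p y k := by
    intro k hk
    by_contra hc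
    exact absurd (Nat.find_le hc : N ≤ k) (Nat.not_le.mpr hk)
  refine ⟨N, hNpre, ?_⟩
  have hS : S p x N = S p y N := S_eq_of_digits_eq p hp hx hy hNpre
  have hmono : S p x (N+1) ≤ S p y (N+1) := by
    apply Int.floor_le_floor
    have hA : 0 < A p (N+1) := A_pos p hp (N+1)
    nlinarith
  rw [S_succ p hp hx N, S_succ p hp hy N, hS] at hmono
  have : (cantorDigit p x N : ℤ) ≤ cantorDigit p y N := by omega
  omega

end CantorAux

namespace CantorAux

variable (p : ℕ → ℕ)

lemma exists_digit_ne_max (hp : ∀ n, 2 ≤ p n) {x : ℝ} (hx : x ∈ Set.Ico (0:ℝ) 1) (N : ℕ) :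
    ∃ m, N < m ∧ cantorDigit p x m ≠ p m - 1 := by
  by_contra h
  push_neg at h
  set c : ℝ := (S p x (N+1) + 1) / A p (N+1) with hc
  have key : ∀ m, N < m → (S p x m + 1 : ℝ) = c * A p m := by
    intro m hm
    induction m with
    | zero => omega
    | succ n ih =>
        rcases Nat.lt_or_ge N n with hNn | hNn
        · -- n > N : use recurrence
          have hd := h n hNn
          have hrec := S_succ p hp hx n
          have hpn := hp n
          have hdz : (cantorDigit p x n : ℤ) = (p n : ℤ) - 1 := by
            rw [hd]; push_cast [Nat.cast_sub (by omega : 1 ≤ p n)]; ring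
          have : S p x (n+1) + 1 = (p n : ℤ) * (S p x n + 1) := by
            rw [hrec, hdz]; ring
          have : (S p x (n+1) + 1 : ℝ) = (p n : ℝ) * (S p x n + 1) := by
            exact_mod_cast congrArg (fun z : ℤ => (z : ℝ)) this
          rw [this, ih hNn, A_succ]; ring
        · -- n + 1 = N + 1 (base case)
          have : n = N := by omega
          subst this
          rw [hc]
          have hA := A_pos p hp (n+1)
          rw [div_mul_cancel₀ _ hA.ne']
  have hxc : x < c := by
    have h1 := lt_S_add_one p hp x (N+1)
    have hA := A_pos p hp (N+1)
    rw [key (N+1) (Nat.lt_succ_self N)] at h1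
    exact (mul_lt_mul_iff_right₀ hA).mp (by linarith [mul_comm (A p (N+1)) x])
  obtain ⟨m, hmN, hmA⟩ := exists_A_gt p hp (1 / (c - x)) N
  have h1 := S_le p hp x m
  have hA := A_pos p hp m
  have h2 : c * A p m - 1 ≤ A p m * x := by
    have := key m hmN
    linarith
  have h3 : A p m * (c - x) ≤ 1 := by nlinarith
  have h4 : (1:ℝ) < A p m * (c - x) := by
    have := (div_lt_iff₀ (sub_pos.mpr hxc)).mp hmA
    linarith
  linarith

end CantorAux

namespace CantorAux

variable (q : ℕ → ℕ)

lemma inv_A_le (hq : ∀ n, 2 ≤ q n) (n : ℕ) : 1 / A q n ≤ (1/2:ℝ)^n := by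
  rw [div_pow, one_pow]
  exact one_div_le_one_div_of_le (by positivity) (two_pow_le_A q hq n)

lemma div_A_le (hq : ∀ n, 2 ≤ q n) {c : ℝ} (n : ℕ) (hc0 : 0 ≤ c) (hc : c ≤ q n) :
    c / A q (n+1) ≤ (1/2:ℝ)^n := by
  have hA := A_pos q hq n
  have hA1 := A_pos q hq (n+1)
  have hqn : (0:ℝ) < q n := by exact_mod_cast Nat.lt_of_lt_of_le two_pos (hq n)
  calc c / A q (n+1) ≤ (q n : ℝ) / A q (n+1) := by
        exact div_le_div_of_nonneg_right hc hA1.le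
  _ = 1 / A q n := by rw [A_succ]; field_simp
  _ ≤ (1/2:ℝ)^n := inv_A_le q hq n

lemma summable_div_A (hq : ∀ n, 2 ≤ q n) {f : ℕ → ℝ} (h0 : ∀ n, 0 ≤ f n)
    (hb : ∀ n, f n ≤ q n) : Summable (fun n => f n / A q (n+1)) := by
  apply Summable.of_nonneg_of_le
    (fun n => div_nonneg (h0 n) (A_pos q hq (n+1)).le)
    (fun n => div_A_le q hq n (h0 n) (hb n))
  exact summable_geometric_of_lt_one (by norm_num) (by norm_num)

lemma hasSum_tail (hq : ∀ n, 2 ≤ q n) (k : ℕ) :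
    HasSum (fun n => ((q (k+n):ℝ) - 1) / A q (k+n+1)) (1 / A q k) := by
  set u : ℕ → ℝ := fun n => 1 / A q (k+n) with hu
  have hueq : ∀ n, ((q (k+n):ℝ) - 1) / A q (k+n+1) = u n - u (n+1) := by
    intro n
    have hA := A_pos q hq (k+n)
    have hqn : (0:ℝ) < q (k+n) := by exact_mod_cast Nat.lt_of_lt_of_le two_pos (hq (k+n))
    rw [hu]
    simp only
    rw [show k + (n+1) = (k+n)+1 from by omega, A_succ]
    field_simp
  have hnn : ∀ n, 0 ≤ ((q (k+n):ℝ) - 1) / A q (k+n+1) := by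
    intro n
    apply div_nonneg _ (A_pos q hq _).le
    have : (2:ℝ) ≤ q (k+n) := by exact_mod_cast hq (k+n)
    linarith
  rw [hasSum_iff_tendsto_nat_of_nonneg hnn]
  have hps : ∀ M, ∑ i ∈ Finset.range M, ((q (k+i):ℝ) - 1) / A q (k+i+1) = u 0 - u M := by
    intro M
    rw [Finset.sum_congr rfl (fun i _ => hueq i)]
    exact Finset.sum_range_sub' u M
  simp only [hps]
  have huM : Filter.Tendsto u Filter.atTop (nhds 0) := by
    have hb : ∀ n, u n ≤ (1/2:ℝ)^n := fun n =>
      (inv_A_le q hq (k+n)).trans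
        (pow_le_pow_of_le_one (by norm_num) (by norm_num) (Nat.le_add_left n k))
    have h0 : ∀ n, 0 ≤ u n := fun n => by
      have := A_pos q hq (k+n); simp only [hu]; positivity
    exact squeeze_zero h0 hb
      (tendsto_pow_atTop_nhds_zero_of_lt_one (by norm_num) (by norm_num))
  have : u 0 = 1 / A q k := by simp [hu]
  rw [← sub_zero (1 / A q k), ← this]
  exact (tendsto_const_nhds).sub huM

end CantorAux

open CantorAux in
lemma psi_eq (p q : ℕ → ℕ) (hp : ∀ n, 2 ≤ p n) (hpq : ∀ n, p n ≤ q n) (x : ℝ) :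
    psiPQ p q x = ∑' n, (cantorDigit p x n : ℝ) / A q (n+1) := by
  unfold psiPQ
  congr 1
  funext n
  have h := digit_lt p hp x n
  have hle : (cantorDigit p x n : ℝ) ≤ (q n : ℝ) - 1 := by
    have h2 : cantorDigit p x n + 1 ≤ q n := by have := hpq n; omega
    have := (Nat.cast_le (α := ℝ)).mpr h2
    push_cast at this
    linarith
  rw [min_eq_left hle]
  rfl

open CantorAux in
theorem stmt13 (p q : ℕ → ℕ) (hp : ∀ n, 2 ≤ p n) (hq : ∀ n, 2 ≤ q n)
    (hpq : ∀ n, p n ≤ q n) :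
    StrictMonoOn (psiPQ p q) (Set.Ico 0 1) ∧ Set.InjOn (psiPQ p q) (Set.Ico 0 1) := by
  have hmono : StrictMonoOn (psiPQ p q) (Set.Ico 0 1) := by
    intro x hx y hy hxy
    set e : ℝ → ℕ → ℝ := fun z n => (cantorDigit p z n : ℝ) / A q (n+1) with he
    have hdle : ∀ (z : ℝ) n, (cantorDigit p z n : ℝ) ≤ q n := by
      intro z n
      have h1 := digit_lt p hp z n
      have := hpq n
      exact_mod_cast Nat.le_of_lt_succ (by omega)
    have hsx : Summable (e x) := summable_div_A q hq (fun n => Nat.cast_nonneg _) (hdle x)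
    have hsy : Summable (e y) := summable_div_A q hq (fun n => Nat.cast_nonneg _) (hdle y)
    obtain ⟨N, hpre, hlt⟩ := exists_lex p hp hx hy hxy
    -- find m > N with digit + 2 ≤ q m
    have hm : ∃ m, N < m ∧ cantorDigit p x m + 2 ≤ q m := by
      by_cases hcase : ∃ m, N < m ∧ p m < q m
      · obtain ⟨m, hm1, hm2⟩ := hcase
        exact ⟨m, hm1, by have := digit_lt p hp x m; omega⟩
      · push_neg at hcase
        obtain ⟨m, hm1, hm2⟩ := exists_digit_ne_max p hp hx N
        have h1 := digit_lt p hp x m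
        have h2 := hcase m hm1
        have h3 := hpq m
        have h4 := hp m
        exact ⟨m, hm1, by omega⟩
    obtain ⟨m, hmN, hm2⟩ := hm
    set d : ℕ → ℝ := fun n => e y n - e x n with hd
    have hsd : Summable d := hsy.sub hsx
    have hgoal : 0 < ∑' n, d n → psiPQ p q x < psiPQ p q y := by
      intro h
      rw [psi_eq p q hp hpq x, psi_eq p q hp hpq y]
      have := Summable.tsum_sub hsy hsx
      simp only [hd, he] at h this
      linarith [this ▸ h]
    apply hgoal
    -- split head and tail
    rw [← Summable.sum_add_tsum_nat_add (N+1) hsd]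
    have hhead : ∑ i ∈ Finset.range (N+1), d i = d N := by
      rw [Finset.sum_range_succ]
      rw [Finset.sum_eq_zero, zero_add]
      intro i hi
      simp only [hd, he, hpre i (Finset.mem_range.mp hi), sub_self]
    have hA1 : 0 < A q (N+1) := A_pos q hq (N+1)
    have hAm : 0 < A q (m+1) := A_pos q hq (m+1)
    have hheadge : 1 / A q (N+1) ≤ d N := by
      simp only [hd, he, div_sub_div_same]
      apply div_le_div_of_nonneg_right _ hA1.le
      have : (cantorDigit p x N : ℝ) + 1 ≤ cantorDigit p y N := by exact_mod_cast hlt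
      linarith
    -- tail lower bound
    set ℓ : ℕ → ℝ := fun i =>
      -(((q (N+1+i):ℝ) - 1) / A q (N+1+i+1)) +
        (if i = m - (N+1) then (1:ℝ)/A q (m+1) else 0) with hℓ
    have hs1 : Summable (fun i => -(((q (N+1+i):ℝ) - 1) / A q (N+1+i+1))) :=
      ((hasSum_tail q hq (N+1)).summable).neg
    have hs2 : Summable (fun i => (if i = m - (N+1) then (1:ℝ)/A q (m+1) else 0)) := by
      apply summable_of_ne_finset_zero (s := {m - (N+1)})
      intro i hi
      simp only [Finset.mem_singleton] at hi
      simp [hi]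
    have hsℓ : Summable ℓ := hs1.add hs2
    have htsumℓ : ∑' i, ℓ i = -(1 / A q (N+1)) + 1 / A q (m+1) := by
      rw [hℓ]
      rw [Summable.tsum_add hs1 hs2, tsum_neg, (hasSum_tail q hq (N+1)).tsum_eq, tsum_ite_eq]
    have hpt : ∀ i, ℓ i ≤ d (i + (N+1)) := by
      intro i
      have hj : i + (N+1) = N+1+i := by omega
      have hAj : 0 < A q (N+1+i+1) := A_pos q hq _
      by_cases hi : i = m - (N+1)
      · have hjm : N+1+i = m := by omega
        simp only [hℓ, if_pos hi, hd, he, hj, hjm, div_sub_div_same]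
        have hxm : (cantorDigit p x m : ℝ) ≤ (q m : ℝ) - 2 := by
          have h2 := (Nat.cast_le (α := ℝ)).mpr hm2
          push_cast at h2
          linarith
        have h2 : (0:ℝ) ≤ cantorDigit p y m := Nat.cast_nonneg _
        rw [← neg_div, ← add_div]
        apply div_le_div_of_nonneg_right _ hAm.le
        linarith
      · simp only [hℓ, if_neg hi, add_zero, hd, he, hj]
        rw [← neg_div, div_sub_div_same]
        apply div_le_div_of_nonneg_right _ hAj.le
        have h1 : (cantorDigit p x (N+1+i) : ℝ) ≤ (q (N+1+i) : ℝ) - 1 := by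
          have h := digit_lt p hp x (N+1+i)
          have := hpq (N+1+i)
          have : cantorDigit p x (N+1+i) + 1 ≤ q (N+1+i) := by omega
          have := (Nat.cast_le (α := ℝ)).mpr this
          push_cast at this
          linarith
        have h2 : (0:ℝ) ≤ cantorDigit p y (N+1+i) := Nat.cast_nonneg _
        linarith
    have htail : ∑' i, ℓ i ≤ ∑' i, d (i + (N+1)) := by
      apply Summable.tsum_le_tsum hpt hsℓ
      exact (summable_nat_add_iff (N+1)).mpr hsd
    rw [hhead]
    have := htsumℓ ▸ htail
    calc (0:ℝ) < 1 / A q (m+1) := by positivity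
    _ ≤ d N + ∑' i, d (i + (N+1)) := by linarith
  exact ⟨hmono, hmono.injOn⟩
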